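/- Let ABCD be a rectangle with center O, E ∈ AB and F ∈ CD with E, F, O collinear, G ∈ BC with ∠EGB = ∠FGC, and H ∈ DA with ∠EHA = ∠FHD. Then EGFH is a parallelogram whose sides are parallel to the diagonals of ABCD. -/

import Mathlib

open Real EuclideanGeometry

open RealInnerProductSpace in
set_option maxHeartbeats 1000000 in
private lemma key_reflection {V : Type*} [NormedAddCommGroup V] [InnerProductSpace ℝ V]
    {u v : V} (huv : ⟪u, v⟫ = 0) (hu : u ≠ 0) (hv : v ≠ 0)
    {e g : ℝ} (he0 : 0 ≤ e) (he1 : e ≤ 1) (hg0 : 0 ≤ g) (hg1 : g ≤ 1)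
    (hangle : InnerProductGeometry.angle ((e - 1) • u + (-g) • v) ((-g) • v)
            = InnerProductGeometry.angle ((-e) • u + (1 - g) • v) ((1 - g) • v)) :
    g = 1 - e := by
  have hvu : ⟪v, u⟫ = 0 := by rw [real_inner_comm]; exact huv
  have ha : (0:ℝ) < ‖u‖ ^ 2 := by have := norm_pos_iff.mpr hu; positivity
  have hb : (0:ℝ) < ‖v‖ ^ 2 := by have := norm_pos_iff.mpr hv; positivity
  have hvpos : (0:ℝ) < ‖v‖ := norm_pos_iff.mpr hv
  have hin2 : ∀ α β β' : ℝ, ⟪α • u + β • v, β' • v⟫ = β * β' * ‖v‖ ^ 2 := by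
    intro α β β'
    simp [inner_add_left, real_inner_smul_left, real_inner_smul_right, huv, hvu,
      real_inner_self_eq_norm_sq]
    ring
  have hin : ∀ α β α' β' : ℝ,
      ⟪α • u + β • v, α' • u + β' • v⟫ = α * α' * ‖u‖ ^ 2 + β * β' * ‖v‖ ^ 2 := by
    intro α β α' β'
    simp only [inner_add_left, inner_add_right, real_inner_smul_left, real_inner_smul_right,
      huv, hvu, mul_zero, add_zero, zero_add]
    rw [real_inner_self_eq_norm_sq, real_inner_self_eq_norm_sq]
    ring
  have hnorm : ∀ α β : ℝ, ‖α • u + β • v‖ ^ 2 = α ^ 2 * ‖u‖ ^ 2 + β ^ 2 * ‖v‖ ^ 2 := by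
    intro α β
    refine (real_inner_self_eq_norm_sq _).symm.trans ?_
    rw [hin]; ring
  rcases hg0.eq_or_lt with h0 | h0
  · exfalso
    rw [← h0] at hangle
    have hz : ((-(0:ℝ)) • v) = 0 := by rw [neg_zero, zero_smul]
    rw [hz, InnerProductGeometry.angle_zero_right] at hangle
    have hc := congrArg Real.cos hangle
    rw [Real.cos_pi_div_two, InnerProductGeometry.cos_angle, hin2] at hc
    have hxne : (-e) • u + (1 - (0:ℝ)) • v ≠ 0 := by
      intro h
      have h2 := hnorm (-e) (1 - 0)
      rw [h, norm_zero] at h2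
      nlinarith [mul_nonneg (sq_nonneg (-e)) ha.le, hb]
    have hxpos : (0:ℝ) < ‖(-e) • u + (1 - (0:ℝ)) • v‖ := norm_pos_iff.mpr hxne
    have hy : ‖(1 - (0:ℝ)) • v‖ = ‖v‖ := by rw [norm_smul]; norm_num
    rw [hy] at hc
    have hd : (0:ℝ) < (1 - (0:ℝ)) * (1 - 0) * ‖v‖ ^ 2 / (‖(-e) • u + (1 - (0:ℝ)) • v‖ * ‖v‖) :=
      div_pos (by nlinarith [hb]) (mul_pos hxpos hvpos)
    linarith
  rcases hg1.eq_or_lt with h1 | h1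
  · exfalso
    rw [h1] at hangle
    have hz : ((1:ℝ) - 1) • v = 0 := by rw [sub_self, zero_smul]
    rw [hz, InnerProductGeometry.angle_zero_right] at hangle
    have hc := congrArg Real.cos hangle
    rw [Real.cos_pi_div_two, InnerProductGeometry.cos_angle, hin2] at hc
    have hxne : (e - 1) • u + (-(1:ℝ)) • v ≠ 0 := by
      intro h
      have h2 := hnorm (e - 1) (-(1:ℝ))
      rw [h, norm_zero] at h2
      nlinarith [mul_nonneg (sq_nonneg (e - 1)) ha.le, hb]
    have hxpos : (0:ℝ) < ‖(e - 1) • u + (-(1:ℝ)) • v‖ := norm_pos_iff.mpr hxne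
    have hy : ‖(-(1:ℝ)) • v‖ = ‖v‖ := by rw [norm_smul]; norm_num
    rw [hy] at hc
    have hd : (0:ℝ) < (-(1:ℝ)) * (-(1:ℝ)) * ‖v‖ ^ 2 / (‖(e - 1) • u + (-(1:ℝ)) • v‖ * ‖v‖) :=
      div_pos (by nlinarith [hb]) (mul_pos hxpos hvpos)
    linarith
  have h1g : (0:ℝ) < 1 - g := by linarith
  have hc := congrArg Real.cos hangle
  rw [InnerProductGeometry.cos_angle, InnerProductGeometry.cos_angle, hin2, hin2] at hc
  have hy1 : ‖(-g) • v‖ = g * ‖v‖ := by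
    rw [norm_smul, Real.norm_eq_abs, abs_neg, abs_of_pos h0]
  have hy2 : ‖(1 - g) • v‖ = (1 - g) * ‖v‖ := by
    rw [norm_smul, Real.norm_eq_abs, abs_of_pos h1g]
  rw [hy1, hy2] at hc
  set nv := ‖v‖ with hnv
  set n1 := ‖(e - 1) • u + (-g) • v‖ with hn1
  set n2 := ‖(-e) • u + (1 - g) • v‖ with hn2
  have hn1sq := hnorm (e - 1) (-g)
  have hn2sq := hnorm (-e) (1 - g)
  have hn1ne : (e - 1) • u + (-g) • v ≠ 0 := by
    intro h
    rw [h, norm_zero] at hn1sq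
    nlinarith [mul_nonneg (sq_nonneg (e - 1)) ha.le, mul_pos (mul_pos h0 h0) hb]
  have hn2ne : (-e) • u + (1 - g) • v ≠ 0 := by
    intro h
    rw [h, norm_zero] at hn2sq
    nlinarith [mul_nonneg (sq_nonneg (-e)) ha.le, mul_pos (mul_pos h1g h1g) hb]
  have hn1pos : (0:ℝ) < n1 := norm_pos_iff.mpr hn1ne
  have hn2pos : (0:ℝ) < n2 := norm_pos_iff.mpr hn2ne
  rw [div_eq_div_iff (mul_pos hn1pos (mul_pos h0 hvpos)).ne'
    (mul_pos hn2pos (mul_pos h1g hvpos)).ne'] at hc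
  have key2 : g * n2 = (1 - g) * n1 := by
    have hpos : (0:ℝ) < g * (1 - g) * nv ^ 3 :=
      mul_pos (mul_pos h0 h1g) (pow_pos hvpos 3)
    apply mul_left_cancel₀ (ne_of_gt hpos)
    linear_combination hc
  have key3 : (g * n2) ^ 2 = ((1 - g) * n1) ^ 2 := by rw [key2]
  have key4 : (g * e) ^ 2 * ‖u‖ ^ 2 = ((1 - g) * (1 - e)) ^ 2 * ‖u‖ ^ 2 := by
    linear_combination key3 - g ^ 2 * hn2sq + (1 - g) ^ 2 * hn1sq
  have key5 : (g * e - (1 - g) * (1 - e)) * (g * e + (1 - g) * (1 - e)) = 0 := by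
    have h5 := mul_right_cancel₀ (ne_of_gt ha) key4
    linear_combination h5
  rcases mul_eq_zero.mp key5 with h | h
  · linear_combination h
  · exfalso
    have hge : g * e = 0 := by
      nlinarith [mul_nonneg hg0 he0,
        mul_nonneg (by linarith : (0:ℝ) ≤ 1 - g) (by linarith : (0:ℝ) ≤ 1 - e)]
    have h1e : (1 - g) * (1 - e) = 0 := by nlinarith [mul_nonneg hg0 he0]
    have heA : e = 0 := by
      rcases mul_eq_zero.mp hge with h' | h'
      · linarith
      · exact h'
    have heB : e = 1 := by
      rcases mul_eq_zero.mp h1e with h' | h'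
      · linarith
      · linarith
    linarith

/-- In a rectangle `ABCD` with center `O`, if `E ∈ AB`, `F ∈ CD` with `O` on segment `EF`,
`G ∈ BC` with `∠EGB = ∠FGC`, and `H ∈ DA` with `∠EHA = ∠FHD`, then `EGFH` is a
parallelogram whose sides are parallel to the diagonals of `ABCD`. -/
theorem rectangle_billiard_parallelogram (A B C D O E F G H : EuclideanSpace ℝ (Fin 2))
    (hpara : B - A = C - D)
    (hperp : inner ℝ (B - A) (C - B) = (0 : ℝ))
    (hAB : A ≠ B) (hBC : B ≠ C)
    (hO : O = midpoint ℝ A C)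
    (hE : E ∈ segment ℝ A B) (hF : F ∈ segment ℝ C D)
    (hEFO : O ∈ segment ℝ E F)
    (hG : G ∈ segment ℝ B C) (hH : H ∈ segment ℝ D A)
    (hGangle : ∠ E G B = ∠ F G C) (hHangle : ∠ E H A = ∠ F H D) :
    G - E = F - H ∧ (∃ r : ℝ, G - E = r • (C - A)) ∧ (∃ s : ℝ, F - G = s • (D - B)) := by
  obtain ⟨ea, eb, hea, heb, heab, hEeq⟩ := hE
  obtain ⟨fa, fb, hfa, hfb, hfab, hFeq⟩ := hF
  obtain ⟨oa, ob, hoa, hob, hoab, hOeq⟩ := hEFO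
  obtain ⟨ga, gb, hga, hgb, hgab, hGeq⟩ := hG
  obtain ⟨ka, kb, hka, hkb, hkab, hHeq⟩ := hH
  have hea' : ea = 1 - eb := by linarith
  have hfa' : fa = 1 - fb := by linarith
  have hoa' : oa = 1 - ob := by linarith
  have hga' : ga = 1 - gb := by linarith
  have hka' : ka = 1 - kb := by linarith
  subst hea' hfa' hoa' hga' hka'
  have hD : D = A + (C - B) := by linear_combination (norm := module) hpara
  have hEp : E = A + eb • (B - A) := by rw [← hEeq]; module
  have hFp : F = A + (1 - fb) • (B - A) + (C - B) := by rw [← hFeq, hD]; module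
  have hGp : G = A + (B - A) + gb • (C - B) := by rw [← hGeq]; module
  have hHp : H = A + (1 - kb) • (C - B) := by rw [← hHeq, hD]; module
  have hOp : O = A + (1/2 : ℝ) • (B - A) + (1/2 : ℝ) • (C - B) := by
    rw [hO, midpoint_eq_smul_add, invOf_eq_inv]; module
  have huA : B - A ≠ 0 := sub_ne_zero.mpr hAB.symm
  have hvB : C - B ≠ 0 := sub_ne_zero.mpr hBC.symm
  have hune : ‖B - A‖ ^ 2 ≠ 0 := pow_ne_zero 2 (norm_ne_zero_iff.mpr huA)
  have hvne : ‖C - B‖ ^ 2 ≠ 0 := pow_ne_zero 2 (norm_ne_zero_iff.mpr hvB)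
  have hperp' : inner ℝ (C - B) (B - A) = (0 : ℝ) := by rw [real_inner_comm]; exact hperp
  -- collinearity gives fb = eb
  have hlin : (eb + ob * (1 - fb - eb) - 1/2) • (B - A) + (ob - 1/2) • (C - B) = 0 := by
    have h0 : (1 - ob) • E + ob • F - O = 0 := sub_eq_zero_of_eq hOeq
    rw [hEp, hFp, hOp] at h0
    linear_combination (norm := module) h0
  have h2 := congrArg (fun w : EuclideanSpace ℝ (Fin 2) => (inner ℝ w (C - B) : ℝ)) hlin
  simp only [inner_add_left, real_inner_smul_left, hperp, real_inner_self_eq_norm_sq,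
    mul_zero, zero_add, add_zero, inner_zero_left] at h2
  have hob' : ob = 1/2 := by
    rcases mul_eq_zero.mp h2 with h | h
    · linarith
    · exact absurd h hvne
  subst hob'
  have h3 := congrArg (fun w : EuclideanSpace ℝ (Fin 2) => (inner ℝ w (B - A) : ℝ)) hlin
  simp only [inner_add_left, real_inner_smul_left, hperp', real_inner_self_eq_norm_sq,
    mul_zero, zero_add, add_zero, inner_zero_left] at h3
  have hfe : eb = fb := by
    rcases mul_eq_zero.mp h3 with h | h
    · linarith
    · exact absurd h hune
  subst hfe
  -- G reflection condition gives gb = 1 - eb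
  have hEG : E - G = (eb - 1) • (B - A) + (-gb) • (C - B) := by rw [hEp, hGp]; module
  have hBG : B - G = (-gb) • (C - B) := by rw [hGp]; module
  have hFG : F - G = (-eb) • (B - A) + (1 - gb) • (C - B) := by rw [hFp, hGp]; module
  have hCG : C - G = (1 - gb) • (C - B) := by rw [hGp]; module
  have hg : gb = 1 - eb := by
    refine key_reflection hperp huA hvB heb (by linarith) hgb (by linarith) ?_
    rw [← hEG, ← hBG, ← hFG, ← hCG]
    exact hGangle
  subst hg
  -- H reflection condition gives kb = 1 - eb
  have hperpH : inner ℝ (A - B) (C - B) = (0 : ℝ) := by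
    have hAB' : A - B = -(B - A) := by module
    rw [hAB', inner_neg_left, hperp, neg_zero]
  have hEH : E - H = ((1 - eb) - 1) • (A - B) + (-(1 - kb)) • (C - B) := by
    rw [hEp, hHp]; module
  have hAH : A - H = (-(1 - kb)) • (C - B) := by rw [hHp]; module
  have hFH : F - H = (-(1 - eb)) • (A - B) + (1 - (1 - kb)) • (C - B) := by
    rw [hFp, hHp]; module
  have hDH : D - H = (1 - (1 - kb)) • (C - B) := by rw [hD, hHp]; module
  have hk : 1 - kb = 1 - (1 - eb) := by
    refine key_reflection hperpH (sub_ne_zero.mpr hAB) hvB (by linarith) (by linarith)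
      (by linarith) (by linarith) ?_
    rw [← hEH, ← hAH, ← hFH, ← hDH]
    exact hHangle
  have hkb' : kb = 1 - eb := by linarith
  subst hkb'
  refine ⟨?_, ⟨1 - eb, ?_⟩, ⟨eb, ?_⟩⟩
  · rw [hGp, hEp, hFp, hHp]; module
  · rw [hGp, hEp]; module
  · rw [hFp, hGp, hD]; module
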